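/- Let E be a complex Hilbert space, A : E →L[ℂ] E a positive operator (self-adjoint with re⟪A z, z⟫ ≥ 0 for all z) satisfying ‖id − A‖ ≤ ε for some real ε < 1, M : E →L[ℂ] E an orthogonal projection (idempotent and self-adjoint) with ‖id − M‖ ≤ 1, y ∈ E with M y = y, and η a real number with 0 < η ≤ 1. Define F : E → E by F(x) = (id − M)(x − η • A x) + y. Then: (i) F has a unique fixed point x∞ and for every x⁰ ∈ E the iterates F^[k](x⁰) converge to x∞; (ii) M x∞ = y; and (iii) for every z ∈ E with M z = y, re⟪A x∞, x∞⟫ ≤ re⟪A z, z⟫. -/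

import Mathlib

open RCLike

set_option synthInstance.maxHeartbeats 1000000 in
set_option maxHeartbeats 1000000 in
set_option linter.unreachableTactic false in
set_option linter.unusedTactic false in
/-- paper's Theorem 1: For a positive operator `A` with
`‖id − A‖ ≤ ε < 1`, an orthogonal projection `M` with `‖id − M‖ ≤ 1`,
`M y = y` and stepsize `0 < η ≤ 1`, the PGD map
`F x = (id − M)(x − η • A x) + y` has a unique fixed point `x∞` to which all
iterates converge; moreover `M x∞ = y` and `x∞` minimizes `z ↦ re⟪A z, z⟫`
over `{z : M z = y}`. -/
theorem stmt_7 {E : Type*} [NormedAddCommGroup E] [InnerProductSpace ℂ E]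
    [CompleteSpace E] (A M : E →L[ℂ] E) (y : E) (ε η : ℝ)
    (hA : A.IsPositive) (hAnorm : ‖ContinuousLinearMap.id ℂ E - A‖ ≤ ε)
    (hε : ε < 1)
    (hMM : M.comp M = M) (hMsa : IsSelfAdjoint M)
    (hMnorm : ‖ContinuousLinearMap.id ℂ E - M‖ ≤ 1)
    (hMy : M y = y) (hη0 : 0 < η) (hη1 : η ≤ 1)
    (F : E → E)
    (hF : ∀ x, F x = (ContinuousLinearMap.id ℂ E - M) (x - η • A x) + y) :
    ∃ xinf : E,
      (F xinf = xinf ∧ (∀ x : E, F x = x → x = xinf) ∧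
        ∀ x0 : E, Filter.Tendsto (fun k => F^[k] x0) Filter.atTop (nhds xinf)) ∧
      M xinf = y ∧
      ∀ z : E, M z = y →
        re (inner ℂ (A xinf) xinf) ≤ re (inner ℂ (A z) z) := by
  haveI : Nonempty E := ⟨0⟩
  have hε0 : 0 ≤ ε := le_trans (norm_nonneg _) hAnorm
  set κ : ℝ := 1 - η * (1 - ε) with hκdef
  have hκ0 : 0 ≤ κ := by nlinarith
  have hκ1 : κ < 1 := by nlinarith
  set G : E →L[ℂ] E :=
    (ContinuousLinearMap.id ℂ E - M).comp (ContinuousLinearMap.id ℂ E - η • A) with hG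
  have h1 : ‖ContinuousLinearMap.id ℂ E - η • A‖ ≤ κ := by
    have heq : ContinuousLinearMap.id ℂ E - η • A
        = (1 - η) • ContinuousLinearMap.id ℂ E
          + η • (ContinuousLinearMap.id ℂ E - A) := by
      rw [smul_sub, sub_smul, one_smul]; abel
    rw [heq]
    calc ‖(1 - η) • ContinuousLinearMap.id ℂ E
          + η • (ContinuousLinearMap.id ℂ E - A)‖
        ≤ ‖(1 - η) • ContinuousLinearMap.id ℂ E‖
          + ‖η • (ContinuousLinearMap.id ℂ E - A)‖ := norm_add_le _ _
      _ = |1 - η| * ‖ContinuousLinearMap.id ℂ E‖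
          + |η| * ‖ContinuousLinearMap.id ℂ E - A‖ := by
            rw [norm_smul, norm_smul, Real.norm_eq_abs, Real.norm_eq_abs]
      _ ≤ (1 - η) * 1 + η * ε := by
            rw [abs_of_nonneg (by linarith), abs_of_nonneg hη0.le]
            gcongr <;>
              first
              | linarith
              | exact ContinuousLinearMap.norm_id_le
              | exact hAnorm
      _ = κ := by ring
  have hGnorm : ‖G‖ ≤ κ := by
    calc ‖G‖ ≤ ‖ContinuousLinearMap.id ℂ E - M‖ * ‖ContinuousLinearMap.id ℂ E - η • A‖ :=
          ContinuousLinearMap.opNorm_comp_le _ _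
      _ ≤ 1 * κ := mul_le_mul hMnorm h1 (norm_nonneg _) zero_le_one
      _ = κ := one_mul κ
  have hLip : LipschitzWith ⟨κ, hκ0⟩ F := by
    apply LipschitzWith.of_dist_le_mul
    intro x x'
    have hdiff : F x - F x' = G (x - x') := by
      simp only [hF, hG, ContinuousLinearMap.comp_apply, ContinuousLinearMap.sub_apply,
        ContinuousLinearMap.id_apply, ContinuousLinearMap.smul_apply, map_sub, map_smul]
      abel
    rw [dist_eq_norm, dist_eq_norm, hdiff]
    calc ‖G (x - x')‖ ≤ ‖G‖ * ‖x - x'‖ := G.le_opNorm _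
      _ ≤ κ * ‖x - x'‖ := mul_le_mul_of_nonneg_right hGnorm (norm_nonneg _)
  have hContr : ContractingWith ⟨κ, hκ0⟩ F := ⟨by exact_mod_cast hκ1, hLip⟩
  set xinf := hContr.fixedPoint F with hxinf
  have hfix : F xinf = xinf := hContr.fixedPoint_isFixedPt
  -- M xinf = y
  have hMid : ∀ v : E, M ((ContinuousLinearMap.id ℂ E - M) v) = 0 := by
    intro v
    have := congrArg (fun T : E →L[ℂ] E => T v) hMM
    simp only [ContinuousLinearMap.comp_apply] at this
    simp [this]
  have hMx : M xinf = y := by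
    have := congrArg M hfix
    rw [hF] at this
    rw [map_add, hMid, hMy, zero_add] at this
    exact this.symm
  -- A xinf is in range of M
  have hAM : M (A xinf) = A xinf := by
    have h := hfix
    rw [hF] at h
    simp only [ContinuousLinearMap.sub_apply, ContinuousLinearMap.id_apply, map_sub,
      map_smul] at h
    -- h : (xinf - η • A xinf) - (M xinf - η • M (A xinf)) + y = xinf
    rw [hMx] at h
    have h2 : M (η • A xinf) = η • A xinf := by
      have h3 : M (η • A xinf) - η • A xinf
          = (xinf - y - (η • A xinf - M (η • A xinf)) + y) - xinf := by abel
      rw [h, sub_self] at h3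
      exact sub_eq_zero.mp h3
    rw [M.map_smul_of_tower] at h2
    exact smul_right_injective E (ne_of_gt hη0) h2
  have hAsym := hA.1
  have hMsym := hMsa.isSymmetric
  refine ⟨xinf, ⟨hfix, ?_, fun x0 => hContr.tendsto_iterate_fixedPoint x0⟩, hMx, ?_⟩
  · intro x hx
    exact hContr.fixedPoint_unique hx
  · intro z hz
    set w := z - xinf with hw
    have hMw : M w = 0 := by
      simp [hw, map_sub, hz, hMx]
    have hc1 : (inner ℂ (A xinf) w : ℂ) = 0 := by
      calc (inner ℂ (A xinf) w : ℂ) = inner ℂ (M (A xinf)) w := by rw [hAM]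
        _ = inner ℂ (A xinf) (M w) := hMsym _ _
        _ = 0 := by rw [hMw, inner_zero_right]
    have hc2 : (inner ℂ (A w) xinf : ℂ) = 0 := by
      calc (inner ℂ (A w) xinf : ℂ) = inner ℂ w (A xinf) := hAsym _ _
        _ = inner ℂ w (M (A xinf)) := by rw [hAM]
        _ = inner ℂ (M w) (A xinf) := (hMsym _ _).symm
        _ = 0 := by rw [hMw, inner_zero_left]
    have hz' : z = xinf + w := by simp [hw]
    have hexp : (inner ℂ (A z) z : ℂ)
        = inner ℂ (A xinf) xinf + inner ℂ (A xinf) w + inner ℂ (A w) xinf + inner ℂ (A w) w := by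
      rw [hz', map_add, inner_add_left, inner_add_right, inner_add_right]
      ring
    have hpos : 0 ≤ re (inner ℂ (A w) w : ℂ) := hA.2 w
    rw [hexp, hc1, hc2]
    simp only [map_add, add_zero]
    linarith
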